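/- Let R = F[[π]] be the power series ring over a finite field F with |F| > 3 and maximal ideal p. The only closed normal subgroup N of SL(2,R) such that SL(2,R)/N is simple is N = {A ∈ SL(2,R) : A ≡ ±I mod p}. -/

import Mathlib

set_option linter.unreachableTactic false
set_option linter.unnecessarySeqFocus false
set_option linter.unusedTactic false
set_option maxHeartbeats 1000000

open Matrix
open scoped commutatorElement

namespace Stmt12Aux

variable {A : Type*} [CommRing A]

abbrev SL2 (A : Type*) [CommRing A] := Matrix.SpecialLinearGroup (Fin 2) A
def E12 (t : A) : SL2 A := ⟨!![1, t; 0, 1], by simp [Matrix.det_fin_two_of]⟩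
def E21 (t : A) : SL2 A := ⟨!![1, 0; t, 1], by simp [Matrix.det_fin_two_of]⟩
def Dg (a b : A) (h : a * b = 1) : SL2 A := ⟨!![a, 0; 0, b], by simp [Matrix.det_fin_two_of, h]⟩
@[simp] lemma E12_coe (t : A) : (E12 t).1 = !![1, t; 0, 1] := rfl
@[simp] lemma E21_coe (t : A) : (E21 t).1 = !![1, 0; t, 1] := rfl
@[simp] lemma Dg_coe (a b : A) (h : a * b = 1) : (Dg a b h).1 = !![a, 0; 0, b] := rfl
lemma E12_mul (s t : A) : E12 s * E12 t = E12 (s + t) := by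
  apply Subtype.ext
  simp [Matrix.SpecialLinearGroup.coe_mul, Matrix.mul_fin_two, add_comm]
@[simp] lemma E12_zero : (E12 (0 : A)) = 1 := by
  apply Subtype.ext
  simp [E12, Matrix.SpecialLinearGroup.coe_one, Matrix.one_fin_two]
lemma E12_inv (t : A) : (E12 t)⁻¹ = E12 (-t) := by
  rw [inv_eq_of_mul_eq_one_right]; rw [E12_mul]; simp
lemma E21_mul (s t : A) : E21 s * E21 t = E21 (s + t) := by
  apply Subtype.ext
  simp [Matrix.SpecialLinearGroup.coe_mul, Matrix.mul_fin_two, add_comm]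
@[simp] lemma E21_zero : (E21 (0 : A)) = 1 := by
  apply Subtype.ext
  simp [E21, Matrix.SpecialLinearGroup.coe_one, Matrix.one_fin_two]
lemma E21_inv (t : A) : (E21 t)⁻¹ = E21 (-t) := by
  rw [inv_eq_of_mul_eq_one_right]; rw [E21_mul]; simp
lemma Dg_inv (a b : A) (h : a * b = 1) : (Dg a b h)⁻¹ = Dg b a (by linear_combination h) := by
  rw [inv_eq_of_mul_eq_one_right]
  apply Subtype.ext
  simp [Matrix.SpecialLinearGroup.coe_mul, Matrix.mul_fin_two,
    Matrix.SpecialLinearGroup.coe_one, Matrix.one_fin_two, h, mul_comm b a]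
lemma Dg_conj_E12 (a b : A) (h : a * b = 1) (t : A) :
    Dg a b h * E12 t * (Dg a b h)⁻¹ = E12 (a * a * t) := by
  rw [Dg_inv]
  apply Subtype.ext
  simp only [Matrix.SpecialLinearGroup.coe_mul, Dg_coe, E12_coe, Matrix.mul_fin_two]
  have hba : b * a = 1 := by linear_combination h
  congr 1 <;> ring_nf <;> simp [h, hba] <;> ring_nf <;>
    linear_combination (t*a*a) * hba
lemma Dg_conj_E21 (a b : A) (h : a * b = 1) (t : A) :
    Dg a b h * E21 t * (Dg a b h)⁻¹ = E21 (b * b * t) := by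
  rw [Dg_inv]
  apply Subtype.ext
  simp only [Matrix.SpecialLinearGroup.coe_mul, Dg_coe, E21_coe, Matrix.mul_fin_two]
  have hba : b * a = 1 := by linear_combination h
  congr 1 <;> ring_nf <;> simp [h, hba] <;> ring_nf <;>
    linear_combination (t*b*b) * hba

lemma det_rel (g : SL2 A) : g.1 0 0 * g.1 1 1 - g.1 0 1 * g.1 1 0 = 1 := by
  have := g.2
  rwa [Matrix.det_fin_two] at this

lemma mem_of_unit_c (H : Subgroup (SL2 A)) (h12 : ∀ t, E12 t ∈ H) (h21 : ∀ t, E21 t ∈ H)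
    (g : SL2 A) (hc : IsUnit (g.1 1 0)) : g ∈ H := by
  set a := g.1 0 0 with ha
  set b := g.1 0 1 with hb
  set c := g.1 1 0 with hcc
  set d := g.1 1 1 with hd
  obtain ⟨cu, hcu⟩ := hc
  set ci : A := ↑cu⁻¹ with hci
  have hu : ci * c = 1 := by rw [hci, ← hcu]; exact cu.inv_mul
  have hv : a * d - b * c = 1 := det_rel g
  have key : g = E12 ((a - 1) * ci) * (E21 c * E12 ((d - 1) * ci)) := by
    apply Subtype.ext
    simp only [Matrix.SpecialLinearGroup.coe_mul, E12_coe, E21_coe, Matrix.mul_fin_two]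
    rw [Matrix.eta_fin_two g.1]
    ext i j
    fin_cases i <;> fin_cases j <;>
      simp only [Fin.mk_zero, Fin.mk_one, Matrix.cons_val', Matrix.cons_val_zero,
        Matrix.cons_val_one, Matrix.head_cons, Matrix.head_fin_const, Matrix.empty_val',
        Matrix.cons_val_fin_one, Matrix.of_apply, ← ha, ← hb, ← hcc, ← hd]
    · linear_combination (1 - a) * hu
    · linear_combination (-b - (a-1)*(d-1)*ci) * hu - ci * hv
    · ring
    · linear_combination (1 - d) * hu
  rw [key]
  exact H.mul_mem (h12 _) (H.mul_mem (h21 _) (h12 _))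

lemma gen_elem [IsLocalRing A] (H : Subgroup (SL2 A)) (h12 : ∀ t, E12 t ∈ H)
    (h21 : ∀ t, E21 t ∈ H) (g : SL2 A) : g ∈ H := by
  by_cases hc : IsUnit (g.1 1 0)
  · exact mem_of_unit_c H h12 h21 g hc
  · have hv : g.1 0 0 * g.1 1 1 - g.1 0 1 * g.1 1 0 = 1 := det_rel g
    have ha : IsUnit (g.1 0 0) := by
      have h1 : IsUnit (g.1 0 0 * g.1 1 1 + -(g.1 0 1 * g.1 1 0)) := by
        rw [← sub_eq_add_neg, hv]; exact isUnit_one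
      rcases IsLocalRing.isUnit_or_isUnit_of_isUnit_add h1 with h | h
      · exact isUnit_of_mul_isUnit_left h
      · rw [neg_mul_eq_neg_mul] at h
        exact absurd (isUnit_of_mul_isUnit_right h) hc
    obtain ⟨au, hau⟩ := ha
    set ai : A := ↑au⁻¹ with hai
    have hua : ai * g.1 0 0 = 1 := by rw [hai, ← hau]; exact au.inv_mul
    set t : A := (1 - g.1 1 0) * ai with ht
    have hmem : E21 t * g ∈ H := by
      apply mem_of_unit_c H h12 h21
      have : (E21 t * g).1 1 0 = t * g.1 0 0 + g.1 1 0 := by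
        simp [Matrix.SpecialLinearGroup.coe_mul, Matrix.mul_apply, Fin.sum_univ_two]
      rw [this]
      have : t * g.1 0 0 + g.1 1 0 = 1 := by
        rw [ht]
        linear_combination (1 - g.1 1 0) * hua
      rw [this]; exact isUnit_one
    have : g = E21 (-t) * (E21 t * g) := by
      rw [← mul_assoc, E21_mul]; simp
    rw [this]
    exact H.mul_mem (h21 _) hmem



lemma comm_Dg_E12 (a b : A) (h : a * b = 1) (s : A) :
    ⁅Dg a b h, E12 s⁆ = E12 ((a * a - 1) * s) := by
  rw [commutatorElement_def, mul_assoc (Dg a b h * E12 s), ← mul_assoc]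
  rw [Dg_conj_E12 a b h s, E12_inv, E12_mul]
  congr 1
  ring

lemma comm_Dg_E21 (a b : A) (h : a * b = 1) (s : A) :
    ⁅Dg a b h, E21 s⁆ = E21 ((b * b - 1) * s) := by
  rw [commutatorElement_def, mul_assoc (Dg a b h * E21 s), ← mul_assoc]
  rw [Dg_conj_E21 a b h s, E21_inv, E21_mul]
  congr 1
  ring

/-- the Weyl element -/
def wel : SL2 A := ⟨!![0, 1; -1, 0], by simp [Matrix.det_fin_two_of]⟩

lemma wel_conj_E21 (t : A) : wel * E21 t * wel⁻¹ = E12 (-t) := by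
  apply Subtype.ext
  simp only [Matrix.SpecialLinearGroup.coe_mul, Matrix.SpecialLinearGroup.coe_inv]
  show !![0,1;-1,0] * !![1,0;t,1] * Matrix.adjugate !![0,1;-1,0] = _
  rw [Matrix.adjugate_fin_two]
  simp [Matrix.mul_fin_two]

lemma wel_inv_conj_E12 (t : A) : wel⁻¹ * E12 t * wel = E21 (-t) := by
  apply Subtype.ext
  simp only [Matrix.SpecialLinearGroup.coe_mul, Matrix.SpecialLinearGroup.coe_inv]
  show Matrix.adjugate !![0,1;-1,0] * !![1,t;0,1] * !![0,1;-1,0] = _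
  rw [Matrix.adjugate_fin_two]
  simp [Matrix.mul_fin_two]

section FieldPart

variable {F : Type*} [Field F]

/-- diagonal with unit u -/
def Du (u : F) (hu : u ≠ 0) : SL2 F := Dg u u⁻¹ (mul_inv_cancel₀ hu)

lemma Du_conj_E12 (u : F) (hu : u ≠ 0) (t : F) :
    Du u hu * E12 t * (Du u hu)⁻¹ = E12 (u * u * t) := Dg_conj_E12 _ _ _ t

lemma hE12_top [Fintype F] (H : Subgroup (SL2 F)) (hn : H.Normal)
    {x : F} (hx : x ≠ 0) (hxH : E12 x ∈ H) : ∀ t : F, E12 t ∈ H := by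
  have sq_mem : ∀ u : F, E12 (u * u * x) ∈ H := by
    intro u
    by_cases hu : u = 0
    · simpa [hu] using H.one_mem
    · have := hn.conj_mem _ hxH (Du u hu)
      rwa [show Du u hu * E12 x * (Du u hu)⁻¹ = E12 (u*u*x) from Du_conj_E12 u hu x] at this
  intro y
  by_cases h2 : (2 : F) = 0
  · -- char 2 : squaring is surjective
    have hinj : Function.Injective (fun u : F => u * u) := by
      intro u v huv
      simp only at huv
      have h0 : (u - v) * (u + v) = 0 := by linear_combination huv
      rcases mul_eq_zero.1 h0 with h | h
      · exact sub_eq_zero.1 h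
      · have hvv : -v = v := by
          have : v + v = 0 := by
            have := congrArg (· * v) h2
            simpa [two_mul] using this
          linear_combination -this
        have : u = -v := by linear_combination h
        rw [this, hvv]
    obtain ⟨u, hu⟩ := (Finite.injective_iff_surjective.mp hinj) (y * x⁻¹)
    simp only at hu
    have := sq_mem u
    rwa [show u * u * x = y by rw [hu]; field_simp] at this
  · set s := (y/x + 1)/2 with hs
    set t := (y/x - 1)/2 with ht
    have key : s * s * x + -(t * t * x) = y := by
      rw [hs, ht]; field_simp; ring
    have := H.mul_mem (sq_mem s) (H.inv_mem (sq_mem t))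
    rwa [E12_inv, E12_mul, key] at this

lemma hE21_top [Fintype F] (H : Subgroup (SL2 F)) (hn : H.Normal)
    {x : F} (hx : x ≠ 0) (hxH : E21 x ∈ H) : ∀ t : F, E21 t ∈ H := by
  have h12 : ∀ t : F, E12 t ∈ H := by
    apply hE12_top H hn (x := -x) (by simpa using hx)
    have := hn.conj_mem _ hxH wel
    rwa [wel_conj_E21] at this
  intro t
  have := hn.conj_mem _ (h12 (-t)) wel⁻¹
  rw [show (wel⁻¹)⁻¹ = (wel : SL2 F) from inv_inv wel] at this
  rwa [wel_inv_conj_E12, neg_neg] at this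

/-- all of SL2 F from one nontrivial elementary -/
lemma top_of_E12 [Fintype F] (H : Subgroup (SL2 F)) (hn : H.Normal)
    {x : F} (hx : x ≠ 0) (hxH : E12 x ∈ H) : ∀ g : SL2 F, g ∈ H := by
  have h12 := hE12_top H hn hx hxH
  have h21 : ∀ t : F, E21 t ∈ H := by
    intro t
    have := hn.conj_mem _ (h12 (-t)) wel⁻¹
    rw [show (wel⁻¹)⁻¹ = (wel : SL2 F) from inv_inv wel] at this
    rwa [wel_inv_conj_E12, neg_neg] at this
  exact gen_elem H h12 h21


/-- anti-diagonal-ish matrix [[0,-c⁻¹],[c,τ]] -/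
def Bmat {F : Type*} [Field F] {c : F} (hc : c ≠ 0) (τ : F) : SL2 F :=
  ⟨!![0, -c⁻¹; c, τ], by rw [Matrix.det_fin_two_of]; field_simp; ring⟩

@[simp] lemma Bmat_coe {F : Type*} [Field F] {c : F} (hc : c ≠ 0) (τ : F) :
    (Bmat hc τ).1 = !![0, -c⁻¹; c, τ] := rfl

lemma Du_inv (u : F) (hu : u ≠ 0) :
    (Du u hu)⁻¹ = Dg u⁻¹ u (inv_mul_cancel₀ hu) := by
  unfold Du
  rw [Dg_inv]

lemma diag_step [Fintype F] (H : Subgroup (SL2 F)) (hn : H.Normal)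
    {c : F} (hc : c ≠ 0) {τ : F} (hτ : τ ≠ 0) {u : F} (hu : u ≠ 0) (hu2 : u * u ≠ 1)
    (hB : Bmat hc τ ∈ H) : ∀ g : SL2 F, g ∈ H := by
  have hu' : u⁻¹ ≠ 0 := inv_ne_zero hu
  set B := Bmat hc τ with hBdef
  have hP1 : Du u hu * B * (Du u hu)⁻¹ * B⁻¹ ∈ H :=
    H.mul_mem (hn.conj_mem _ hB _) (H.inv_mem hB)
  have hP2 : Du u⁻¹ hu' * B * (Du u⁻¹ hu')⁻¹ * B⁻¹ ∈ H :=
    H.mul_mem (hn.conj_mem _ hB _) (H.inv_mem hB)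
  have key : (Du u hu * B * (Du u hu)⁻¹ * B⁻¹) * (Du u⁻¹ hu' * B * (Du u⁻¹ hu')⁻¹ * B⁻¹)
      = E21 (c * τ * (1 - u⁻¹ * u⁻¹)^2) := by
    apply Subtype.ext
    simp only [Matrix.SpecialLinearGroup.coe_mul, Matrix.SpecialLinearGroup.coe_inv, Du,
      Dg_coe, hBdef, Bmat_coe, E21_coe, Matrix.adjugate_fin_two, Matrix.mul_fin_two, inv_inv]
    ext i j
    fin_cases i <;> fin_cases j <;>
      simp only [Fin.mk_zero, Fin.mk_one, Matrix.cons_val', Matrix.cons_val_zero,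
        Matrix.cons_val_one, Matrix.head_cons, Matrix.head_fin_const, Matrix.empty_val',
        Matrix.cons_val_fin_one, Matrix.of_apply] <;>
      simp only [mul_zero, zero_mul, add_zero, zero_add, neg_zero, neg_neg, mul_neg,
        neg_mul, one_mul, mul_one] <;> (try field_simp) <;> (try ring) <;>
      (try field_simp) <;> (try ring)
  have : E21 (c * τ * (1 - u⁻¹ * u⁻¹)^2) ∈ H := by rw [← key]; exact H.mul_mem hP1 hP2
  have hx : c * τ * (1 - u⁻¹ * u⁻¹)^2 ≠ 0 := by
    have h1 : 1 - u⁻¹ * u⁻¹ ≠ 0 := by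
      intro h
      apply hu2
      field_simp [sub_eq_zero] at h
      linear_combination h
    exact mul_ne_zero (mul_ne_zero hc hτ) (pow_ne_zero 2 h1)
  have h21 := hE21_top H hn hx this
  intro g
  have h12 : ∀ t : F, E12 t ∈ H := by
    intro t
    have := hn.conj_mem _ (h21 (-t)) wel
    rwa [wel_conj_E21, neg_neg] at this
  exact gen_elem H h12 h21 g


lemma exists_u [Fintype F] (h3 : 3 < Fintype.card F) : ∃ u : F, u ≠ 0 ∧ u * u ≠ 1 := by
  classical
  by_contra hcon
  push_neg at hcon
  have hsub : (Finset.univ : Finset F) ⊆ {0, 1, -1} := by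
    intro u _
    rcases eq_or_ne u 0 with h | h
    · simp [h]
    · have := hcon u h
      have h1 : (u - 1) * (u + 1) = 0 := by linear_combination this
      rcases mul_eq_zero.1 h1 with h' | h'
      · have : u = 1 := by linear_combination h'
        simp [this]
      · have : u = -1 := by linear_combination h'
        simp [this]
  have hcard : Fintype.card F ≤ 3 := by
    calc Fintype.card F = (Finset.univ : Finset F).card := rfl
    _ ≤ ({0, 1, -1} : Finset F).card := Finset.card_le_card hsub
    _ ≤ 3 := by
      apply le_trans (Finset.card_insert_le _ _)
      simp [Finset.card_insert_le]
      exact lt_of_le_of_lt (Finset.card_insert_le _ _) (by simp)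
  omega

/-- conjugating a matrix with nonzero lower-left entry to `Bmat` form -/
lemma conj_to_Bmat (X : SL2 F) (hc : X.1 1 0 ≠ 0) :
    E12 (-(X.1 0 0) / X.1 1 0) * X * (E12 (-(X.1 0 0) / X.1 1 0))⁻¹
      = Bmat hc (X.1 0 0 + X.1 1 1) := by
  have hv : X.1 0 0 * X.1 1 1 - X.1 0 1 * X.1 1 0 = 1 := det_rel X
  set a := X.1 0 0
  set b := X.1 0 1
  set c := X.1 1 0
  set d := X.1 1 1
  apply Subtype.ext
  rw [E12_inv]
  simp only [Matrix.SpecialLinearGroup.coe_mul, E12_coe, Bmat_coe]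
  rw [Matrix.eta_fin_two X.1]
  simp only [Matrix.mul_fin_two]
  ext i j
  fin_cases i <;> fin_cases j <;>
    simp only [Fin.mk_zero, Fin.mk_one, Matrix.cons_val', Matrix.cons_val_zero,
      Matrix.cons_val_one, Matrix.head_cons, Matrix.head_fin_const, Matrix.empty_val',
      Matrix.cons_val_fin_one, Matrix.of_apply] <;>
    (try field_simp) <;> (try ring) <;> (try linear_combination -hv)

/-- A normal subgroup of SL(2,F), |F| > 3, containing a non-central element is everything. -/
lemma SL2_quasisimple [Fintype F] (h3 : 3 < Fintype.card F)
    (H : Subgroup (SL2 F)) (hn : H.Normal) (X : SL2 F) (hX : X ∈ H)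
    (h1 : X.1 ≠ 1) (hm1 : X.1 ≠ -1) : ∀ g : SL2 F, g ∈ H := by
  obtain ⟨u, hu, hu2⟩ := exists_u h3
  have hv : X.1 0 0 * X.1 1 1 - X.1 0 1 * X.1 1 0 = 1 := det_rel X
  have TRNZ : ∀ Y : SL2 F, Y ∈ H → Y.1 1 0 ≠ 0 → Y.1 0 0 + Y.1 1 1 ≠ 0 →
      ∀ g : SL2 F, g ∈ H := by
    intro Y hY hYc hYτ
    have hBmem : Bmat hYc (Y.1 0 0 + Y.1 1 1) ∈ H := by
      rw [← conj_to_Bmat Y hYc]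
      exact hn.conj_mem _ hY _
    exact diag_step H hn hYc hYτ hu hu2 hBmem
  by_cases hc : X.1 1 0 = 0
  · -- lower-left zero
    set a := X.1 0 0 with ha
    set b := X.1 0 1 with hb
    set d := X.1 1 1 with hd
    have had : a * d = 1 := by rw [ha, hd]; linear_combination hv + (X.1 0 1) * hc
    have hXmat : X.1 = !![a, b; 0, d] := by
      rw [Matrix.eta_fin_two X.1, ← ha, ← hb, ← hd, hc]
    by_cases ha1 : a = 1
    · -- a = 1, d = 1, X = E12 b
      have hd1 : d = 1 := by rw [ha1] at had; linear_combination had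
      have hXE : X = E12 b := by
        apply Subtype.ext; rw [hXmat, ha1, hd1, E12_coe]
      have hbne : b ≠ 0 := by
        intro hb0
        apply h1
        rw [hXmat, ha1, hd1, hb0, Matrix.one_fin_two]
      exact top_of_E12 H hn hbne (hXE ▸ hX)
    · by_cases ham : a = -1
      · -- a = -1 (and -1 ≠ 1 since a ≠ 1)
        have h2 : (2 : F) ≠ 0 := by
          intro h2
          exact ha1 (by rw [ham]; linear_combination -h2)
        have hd1 : d = -1 := by rw [ham] at had; linear_combination -had
        have hbne : b ≠ 0 := by
          intro hb0
          apply hm1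
          rw [hXmat, ham, hd1, hb0]
          have hneg1 : (-1 : Matrix (Fin 2) (Fin 2) F) = !![-1,0;0,-1] := by
            ext i j
            fin_cases i <;> fin_cases j <;> simp [Matrix.one_fin_two]
          rw [hneg1]
        have hXX : X * X = E12 (-(2 * b)) := by
          apply Subtype.ext
          simp only [Matrix.SpecialLinearGroup.coe_mul, hXmat, ham, hd1, E12_coe,
            Matrix.mul_fin_two]
          ext i j
          fin_cases i <;> fin_cases j <;>
            simp only [Fin.mk_zero, Fin.mk_one, Matrix.cons_val', Matrix.cons_val_zero,
              Matrix.cons_val_one, Matrix.head_cons, Matrix.head_fin_const, Matrix.empty_val',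
              Matrix.cons_val_fin_one, Matrix.of_apply] <;> ring
        have hmem : E12 (-(2*b)) ∈ H := hXX ▸ H.mul_mem hX hX
        have : -(2*b) ≠ 0 := by simpa using mul_ne_zero h2 hbne
        exact top_of_E12 H hn this hmem
      · -- a ≠ ±1 so a² ≠ 1 : commutator with E12 1
        have ha2 : a * a - 1 ≠ 0 := by
          intro h
          rcases mul_eq_zero.1 (show (a - 1) * (a + 1) = 0 by linear_combination h) with h' | h'
          · exact ha1 (by linear_combination h')
          · exact ham (by linear_combination h')
        have hC : X * E12 1 * X⁻¹ * (E12 1)⁻¹ ∈ H := by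
          have : X * (E12 1 * X⁻¹ * (E12 1)⁻¹) ∈ H :=
            H.mul_mem hX (by simpa using hn.conj_mem _ (H.inv_mem hX) (E12 1))
          simpa [mul_assoc] using this
        have hCeq : X * E12 1 * X⁻¹ * (E12 1)⁻¹ = E12 (a * a - 1) := by
          apply Subtype.ext
          rw [E12_inv]
          simp only [Matrix.SpecialLinearGroup.coe_mul, Matrix.SpecialLinearGroup.coe_inv,
            hXmat, E12_coe, Matrix.adjugate_fin_two, Matrix.mul_fin_two]
          ext i j
          fin_cases i <;> fin_cases j <;>
            simp only [Fin.mk_zero, Fin.mk_one, Matrix.cons_val', Matrix.cons_val_zero,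
              Matrix.cons_val_one, Matrix.head_cons, Matrix.head_fin_const, Matrix.empty_val',
              Matrix.cons_val_fin_one, Matrix.of_apply] <;>
            (try ring) <;> (try linear_combination had) <;> (try linear_combination -had) <;>
            (try linear_combination b * had) <;> (try linear_combination (a*a - 1 + 1) * had)
        exact top_of_E12 H hn ha2 (hCeq ▸ hC)
  · -- c ≠ 0
    by_cases hτ : X.1 0 0 + X.1 1 1 ≠ 0
    · exact TRNZ X hX hc hτ
    · push_neg at hτ
      have hB : Bmat hc (X.1 0 0 + X.1 1 1) ∈ H := by
        rw [← conj_to_Bmat X hc]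
        exact hn.conj_mem _ hX _
      rw [hτ] at hB
      set c := X.1 1 0 with hcd
      have hP : ∀ r : F, E12 r * Bmat hc 0 * (E12 r)⁻¹ * (Bmat hc 0)⁻¹ ∈ H :=
        fun r => H.mul_mem (hn.conj_mem _ hB _) (H.inv_mem hB)
      have hPeq : ∀ r : F, (E12 r * Bmat hc 0 * (E12 r)⁻¹ * (Bmat hc 0)⁻¹).1
          = !![r*r*c*c + 1, r; r*c*c, 1] := by
        intro r
        rw [E12_inv]
        simp only [Matrix.SpecialLinearGroup.coe_mul, Matrix.SpecialLinearGroup.coe_inv,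
          Bmat_coe, E12_coe, Matrix.adjugate_fin_two, Matrix.mul_fin_two]
        ext i j
        fin_cases i <;> fin_cases j <;>
          simp only [Fin.mk_zero, Fin.mk_one, Matrix.cons_val', Matrix.cons_val_zero,
            Matrix.cons_val_one, Matrix.head_cons, Matrix.head_fin_const, Matrix.empty_val',
            Matrix.cons_val_fin_one, Matrix.of_apply, mul_zero, zero_mul, add_zero, zero_add,
            neg_zero, neg_neg, mul_neg, neg_mul, one_mul, mul_one] <;>
          (try field_simp) <;> (try ring) <;> (try tauto)
      have hrex : ∃ r : F, r ≠ 0 ∧ r*r*c*c + 2 ≠ 0 := by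
        by_cases hc2 : c*c + 2 = 0
        · refine ⟨u, hu, ?_⟩
          intro h
          apply hu2
          have hcc : c*c ≠ 0 := mul_ne_zero hc hc
          have h' : (u*u) * (c*c) = 1 * (c*c) := by linear_combination h - hc2
          exact mul_right_cancel₀ hcc h'
        · exact ⟨1, one_ne_zero, by intro h; exact hc2 (by linear_combination h)⟩
      obtain ⟨r, hr, hr2⟩ := hrex
      apply TRNZ _ (hP r)
      · rw [hPeq r]
        show r*c*c ≠ 0
        exact mul_ne_zero (mul_ne_zero hr hc) hc
      · rw [hPeq r]
        show r*r*c*c + 1 + 1 ≠ 0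
        intro h
        exact hr2 (by linear_combination h)

end FieldPart




section Entries

variable {A : Type*} [CommRing A]

/-- all entries in an ideal -/
def Ent (P : Matrix (Fin 2) (Fin 2) A) (I : Ideal A) : Prop := ∀ i j, P i j ∈ I

lemma Ent.mul_left {P : Matrix (Fin 2) (Fin 2) A} {I : Ideal A} (h : Ent P I)
    (Q : Matrix (Fin 2) (Fin 2) A) : Ent (Q * P) I := by
  intro i j
  rw [Matrix.mul_apply, Fin.sum_univ_two]
  exact I.add_mem (I.mul_mem_left _ (h 0 j)) (I.mul_mem_left _ (h 1 j))

lemma Ent.mul_right {P : Matrix (Fin 2) (Fin 2) A} {I : Ideal A} (h : Ent P I)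
    (Q : Matrix (Fin 2) (Fin 2) A) : Ent (P * Q) I := by
  intro i j
  rw [Matrix.mul_apply, Fin.sum_univ_two]
  exact I.add_mem (I.mul_mem_right _ (h i 0)) (I.mul_mem_right _ (h i 1))

lemma Ent.add {P Q : Matrix (Fin 2) (Fin 2) A} {I : Ideal A} (hP : Ent P I) (hQ : Ent Q I) :
    Ent (P + Q) I := fun i j => by
  rw [Matrix.add_apply]; exact I.add_mem (hP i j) (hQ i j)

lemma Ent.sub {P Q : Matrix (Fin 2) (Fin 2) A} {I : Ideal A} (hP : Ent P I) (hQ : Ent Q I) :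
    Ent (P - Q) I := fun i j => by
  rw [Matrix.sub_apply]; exact I.sub_mem (hP i j) (hQ i j)

lemma Ent.neg {P : Matrix (Fin 2) (Fin 2) A} {I : Ideal A} (hP : Ent P I) :
    Ent (-P) I := fun i j => by
  rw [Matrix.neg_apply]; exact I.neg_mem (hP i j)

lemma Ent.mul_pow {P Q : Matrix (Fin 2) (Fin 2) A} {I : Ideal A} {m : ℕ} (hm : 1 ≤ m)
    (hP : Ent P (I ^ m)) (hQ : Ent Q (I ^ m)) : Ent (P * Q) (I ^ (m + 1)) := by
  intro i j
  rw [Matrix.mul_apply, Fin.sum_univ_two]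
  have hQ' : ∀ i j, Q i j ∈ I := by
    intro i j
    have := Ideal.pow_le_pow_right (I := I) hm (hQ i j)
    rwa [pow_one] at this
  have : ∀ (k : Fin 2), P i k * Q k j ∈ I ^ (m + 1) := by
    intro k
    rw [pow_succ]
    exact Ideal.mul_mem_mul (hP i k) (hQ' k j)
  exact Ideal.add_mem _ (this 0) (this 1)

end Entries

section Main

variable {F : Type*} [Field F]

local notation "GL" => SL2 (PowerSeries F)

lemma coe_inv_mul {A : Type*} [CommRing A] (g : SL2 A) : (g⁻¹).1 * g.1 = 1 := by
  rw [← Matrix.SpecialLinearGroup.coe_mul, inv_mul_cancel,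
    Matrix.SpecialLinearGroup.coe_one]

lemma coe_mul_inv {A : Type*} [CommRing A] (g : SL2 A) : g.1 * (g⁻¹).1 = 1 := by
  rw [← Matrix.SpecialLinearGroup.coe_mul, mul_inv_cancel,
    Matrix.SpecialLinearGroup.coe_one]

/-- ideal (X)^n -/
noncomputable def Jn (F : Type*) [Field F] (n : ℕ) : Ideal (PowerSeries F) :=
  Ideal.span {(PowerSeries.X : PowerSeries F)} ^ n

/-- the principal congruence subgroups -/
noncomputable def Kn (F : Type*) [Field F] (n : ℕ) : Subgroup (SL2 (PowerSeries F)) where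
  carrier := {g | Ent (g.1 - 1) (Jn F n)}
  one_mem' := by
    intro i j
    simp only [Matrix.SpecialLinearGroup.coe_one, sub_self, Matrix.zero_apply]
    exact (Jn F n).zero_mem
  mul_mem' := by
    intro a b ha hb
    show Ent ((a * b).1 - 1) (Jn F n)
    have key : (a * b).1 - 1 = (a.1 - 1) * b.1 + (b.1 - 1) := by
      rw [Matrix.SpecialLinearGroup.coe_mul]
      noncomm_ring
    rw [key]
    exact ((ha.mul_right _).add hb)
  inv_mem' := by
    intro a ha
    show Ent ((a⁻¹).1 - 1) (Jn F n)
    have key : (a⁻¹).1 - 1 = -((a⁻¹).1 * (a.1 - 1)) := by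
      rw [Matrix.mul_sub, coe_inv_mul, Matrix.mul_one]
      noncomm_ring
    rw [key]
    exact (ha.mul_left _).neg

lemma mem_Kn (n : ℕ) (g : GL) : g ∈ Kn F n ↔ Ent (g.1 - 1) (Jn F n) := Iff.rfl

lemma Kn_normal (n : ℕ) : (Kn F n).Normal := by
  constructor
  intro a ha g
  show Ent ((g * a * g⁻¹).1 - 1) (Jn F n)
  have key : (g * a * g⁻¹).1 - 1 = g.1 * (a.1 - 1) * (g⁻¹).1 := by
    rw [Matrix.SpecialLinearGroup.coe_mul, Matrix.SpecialLinearGroup.coe_mul,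
      Matrix.mul_sub, Matrix.mul_one, Matrix.sub_mul, coe_mul_inv]
  rw [key]
  exact (ha.mul_left _).mul_right _

lemma Kn_antitone {n m : ℕ} (h : n ≤ m) : Kn F m ≤ Kn F n := by
  intro g hg i j
  have hle : Jn F m ≤ Jn F n := Ideal.pow_le_pow_right h
  exact hle (hg i j)

/-- commutators descend the congruence filtration -/
lemma comm_Kn {m : ℕ} (hm : 1 ≤ m) {a b : GL} (ha : a ∈ Kn F m) (hb : b ∈ Kn F m) :
    ⁅a, b⁆ ∈ Kn F (m + 1) := by
  show Ent ((a * b * a⁻¹ * b⁻¹).1 - 1) (Jn F (m + 1))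
  have ha' : Ent (a.1 - 1) (Jn F m) := ha
  have hb' : Ent (b.1 - 1) (Jn F m) := hb
  have key : (a * b * a⁻¹ * b⁻¹).1 - 1
      = ((a.1 - 1) * (b.1 - 1) - (b.1 - 1) * (a.1 - 1)) * ((a⁻¹).1 * (b⁻¹).1) := by
    simp only [Matrix.SpecialLinearGroup.coe_mul]
    have e1 : (a.1 - 1) * (b.1 - 1) - (b.1 - 1) * (a.1 - 1) = a.1 * b.1 - b.1 * a.1 := by
      noncomm_ring
    rw [e1, Matrix.sub_mul]
    have e2 : b.1 * a.1 * ((a⁻¹).1 * (b⁻¹).1) = 1 := by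
      rw [show b.1 * a.1 * ((a⁻¹).1 * (b⁻¹).1) = b.1 * (a.1 * (a⁻¹).1) * (b⁻¹).1 by
        noncomm_ring, coe_mul_inv, Matrix.mul_one, coe_mul_inv]
    rw [e2]
    noncomm_ring
  rw [key]
  simp only [Jn] at *
  exact (((ha'.mul_pow hm hb').sub (hb'.mul_pow hm ha')).mul_right _)

/-- reduction homomorphism -/
noncomputable def rho : SL2 (PowerSeries F) →* SL2 F :=
  Matrix.SpecialLinearGroup.map (PowerSeries.constantCoeff (R := F))

lemma rho_coe (g : GL) : (rho g).1 = g.1.map (PowerSeries.constantCoeff (R := F)) := rfl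

lemma rho_surj : Function.Surjective (rho (F := F)) := by
  intro m
  have hdet : ((m.1.map (PowerSeries.C (R := F)))).det = 1 := by
    rw [← RingHom.mapMatrix_apply, ← RingHom.map_det, m.2, RingHom.map_one]
  refine ⟨⟨m.1.map (PowerSeries.C (R := F)), hdet⟩, ?_⟩
  apply Subtype.ext
  show (m.1.map (PowerSeries.C (R := F))).map (PowerSeries.constantCoeff (R := F)) = m.1
  rw [Matrix.map_map]
  have hcomp : ((PowerSeries.constantCoeff (R := F)) : PowerSeries F → F) ∘ (PowerSeries.C (R := F)) = id := by
    funext x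
    simp
  rw [hcomp, Matrix.map_id]

/-- constant-coefficient-wise membership in Kn 1 -/
lemma mem_Kn_one_of_red_one (g : GL) (h : g.1.map (PowerSeries.constantCoeff (R := F)) = 1) :
    g ∈ Kn F 1 := by
  intro i j
  have hc : (PowerSeries.constantCoeff (R := F)) (g.1 i j) = (1 : Matrix (Fin 2) (Fin 2) F) i j := by
    rw [← h, Matrix.map_apply]
  rw [Matrix.sub_apply, Jn, pow_one, Ideal.mem_span_singleton, PowerSeries.X_dvd_iff,
    map_sub, hc]
  by_cases hij : i = j <;> simp [Matrix.one_apply, hij]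


/-- reduction of coefficients, matrix level -/
noncomputable def cmap (g : GL) : Matrix (Fin 2) (Fin 2) F :=
  g.1.map (PowerSeries.constantCoeff (R := F))

lemma cmap_mul (g h : GL) : cmap (g * h) = cmap g * cmap h := by
  unfold cmap
  rw [Matrix.SpecialLinearGroup.coe_mul, ← RingHom.mapMatrix_apply, ← RingHom.mapMatrix_apply,
    ← RingHom.mapMatrix_apply, _root_.map_mul]

lemma cmap_one : cmap (1 : GL) = 1 := by
  unfold cmap
  rw [Matrix.SpecialLinearGroup.coe_one, ← RingHom.mapMatrix_apply, _root_.map_one]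

lemma cmap_inv_of {g : GL} {e : Matrix (Fin 2) (Fin 2) F} (he : e * e = 1) (h : cmap g = e) :
    cmap g⁻¹ = e := by
  have key : cmap g⁻¹ * cmap g = 1 := by
    rw [← cmap_mul, inv_mul_cancel, cmap_one]
  rw [h] at key
  calc cmap g⁻¹ = cmap g⁻¹ * (e * e) := by rw [he, mul_one]
  _ = (cmap g⁻¹ * e) * e := by rw [mul_assoc]
  _ = e := by rw [key, one_mul]

/-- the subgroup of matrices reducing to ±1 -/
noncomputable def Mg (F : Type*) [Field F] : Subgroup (SL2 (PowerSeries F)) where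
  carrier := {g | g.1.map (PowerSeries.constantCoeff (R := F)) = 1 ∨
    g.1.map (PowerSeries.constantCoeff (R := F)) = -1}
  one_mem' := Or.inl cmap_one
  mul_mem' := by
    intro a b ha hb
    show cmap (a * b) = 1 ∨ cmap (a * b) = -1
    rw [cmap_mul]
    rcases ha with ha | ha <;> rcases hb with hb | hb <;>
      rw [show a.1.map (PowerSeries.constantCoeff (R := F)) = cmap a from rfl] at ha <;>
      rw [show b.1.map (PowerSeries.constantCoeff (R := F)) = cmap b from rfl] at hb <;>
      rw [ha, hb] <;> simp
  inv_mem' := by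
    intro a ha
    rcases ha with ha | ha
    · exact Or.inl (cmap_inv_of (by simp) ha)
    · exact Or.inr (cmap_inv_of (by simp) ha)

lemma mem_Mg (g : GL) : g ∈ Mg F ↔ (cmap g = 1 ∨ cmap g = -1) := Iff.rfl

lemma Mg_normal : (Mg F).Normal := by
  constructor
  intro a ha g
  rw [mem_Mg] at ha ⊢
  have hgg : cmap g * cmap g⁻¹ = 1 := by rw [← cmap_mul, mul_inv_cancel, cmap_one]
  rcases ha with ha | ha
  · left
    rw [cmap_mul, cmap_mul, ha, mul_one, hgg]
  · right
    rw [cmap_mul, cmap_mul, ha, mul_neg_one, neg_mul, hgg]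

lemma comm_Mg : ∀ a ∈ Mg F, ∀ b ∈ Mg F, ⁅a, b⁆ ∈ Kn F 1 := by
  intro a ha b hb
  apply mem_Kn_one_of_red_one
  show cmap ⁅a, b⁆ = 1
  rw [commutatorElement_def, cmap_mul, cmap_mul, cmap_mul]
  rw [mem_Mg] at ha hb
  rcases ha with ha | ha <;> rcases hb with hb | hb <;>
    rw [ha, hb, cmap_inv_of (by simp) ha, cmap_inv_of (by simp) hb] <;> simp

end Main



end Stmt12Aux

open Stmt12Aux

/-- For `R = F[[π]]`, `F` finite with `|F| > 3`, the only closed normal subgroup `N` of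
`SL(2,R)` with simple quotient is `N = {A : A ≡ ±I mod π}`. -/
theorem stmt12 (F : Type*) [Field F] [Fintype F] (h : 3 < Fintype.card F)
    (N : Subgroup (Matrix.SpecialLinearGroup (Fin 2) (PowerSeries F))) [N.Normal]
    (hclosed : ∀ g : Matrix.SpecialLinearGroup (Fin 2) (PowerSeries F),
      (∀ n : ℕ, ∃ h' ∈ N, ∀ i j : Fin 2,
        g.val i j - (h' : Matrix.SpecialLinearGroup (Fin 2) (PowerSeries F)).val i j ∈
          Ideal.span {(PowerSeries.X : PowerSeries F)} ^ n) → g ∈ N)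
    (hsimple : IsSimpleGroup (Matrix.SpecialLinearGroup (Fin 2) (PowerSeries F) ⧸ N)) :
    ∀ A : Matrix.SpecialLinearGroup (Fin 2) (PowerSeries F),
      A ∈ N ↔ (A.val.map ((PowerSeries.constantCoeff (R := F))) = 1 ∨
        A.val.map ((PowerSeries.constantCoeff (R := F))) = -1) := by
  classical
  set π := QuotientGroup.mk' N with hπdef
  have hπsurj : Function.Surjective π := QuotientGroup.mk'_surjective N
  -- dichotomy from simplicity of the quotient
  have hdich : ∀ (K : Subgroup (Matrix.SpecialLinearGroup (Fin 2) (PowerSeries F))),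
      K.Normal → K ≤ N ∨ K.map π = ⊤ := by
    intro K hK
    haveI : (K.map π).Normal := Subgroup.Normal.map hK π hπsurj
    rcases this.eq_bot_or_eq_top with h' | h'
    · left
      intro k hk
      have hmem : π k ∈ K.map π := Subgroup.mem_map_of_mem π hk
      rw [h', Subgroup.mem_bot] at hmem
      exact (QuotientGroup.eq_one_iff k).mp hmem
    · right; exact h'
  have hNne : N ≠ ⊤ := by
    intro hN
    have hsub : Subsingleton (Matrix.SpecialLinearGroup (Fin 2) (PowerSeries F) ⧸ N) :=
      hN ▸ QuotientGroup.subsingleton_quotient_top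
    exact not_subsingleton _ hsub
  -- some congruence subgroup is inside N
  have hKnN : ∃ n, Kn F n ≤ N := by
    by_contra hno
    push_neg at hno
    apply hNne
    rw [Subgroup.eq_top_iff']
    intro g
    apply hclosed g
    intro n
    rcases hdich (Kn F n) (Kn_normal n) with h' | h'
    · exact absurd h' (hno n)
    · have hmem : π g ∈ (Kn F n).map π := by rw [h']; trivial
      obtain ⟨k, hk, hπk⟩ := hmem
      refine ⟨g * k⁻¹, ?_, ?_⟩
      · apply (QuotientGroup.eq_one_iff _).mp
        show π (g * k⁻¹) = 1
        rw [_root_.map_mul, _root_.map_inv, hπk]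
        simp
      · intro i j
        have hk' : Ent (k.1 - 1) (Jn F n) := hk
        have hgk : (g * k⁻¹) * k = g := by group
        have key : g.1 i j - (g * k⁻¹).1 i j
            = (g * k⁻¹).1 i 0 * (k.1 - 1) 0 j + (g * k⁻¹).1 i 1 * (k.1 - 1) 1 j := by
          have hcoe : g.1 = (g * k⁻¹).1 * k.1 := by
            rw [← Matrix.SpecialLinearGroup.coe_mul, hgk]
          rw [hcoe, Matrix.mul_apply, Fin.sum_univ_two, Matrix.sub_apply, Matrix.sub_apply]
          fin_cases j <;> simp [Matrix.one_apply] <;> ring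
        show g.1 i j - (g * k⁻¹).1 i j ∈ Jn F n
        rw [key]
        exact (Jn F n).add_mem ((Jn F n).mul_mem_left _ (hk' 0 j))
          ((Jn F n).mul_mem_left _ (hk' 1 j))
  obtain ⟨n, hKn_le⟩ := hKnN
  -- M ≤ N
  have hMN : Mg F ≤ N := by
    rcases hdich (Mg F) Mg_normal with h' | h'
    · exact h'
    · exfalso
      -- quotient is solvable
      have hsolv : IsSolvable (Matrix.SpecialLinearGroup (Fin 2) (PowerSeries F) ⧸ N) := by
        have hds : ∀ i, derivedSeries (Matrix.SpecialLinearGroup (Fin 2) (PowerSeries F) ⧸ N)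
            (i + 1) ≤ (Kn F (i + 1)).map π := by
          intro i
          induction i with
          | zero =>
            rw [derivedSeries_succ, derivedSeries_zero, ← h', ← Subgroup.map_commutator]
            exact Subgroup.map_mono (Subgroup.commutator_le.mpr comm_Mg)
          | succ i ih =>
            rw [derivedSeries_succ]
            calc ⁅derivedSeries _ (i+1), derivedSeries _ (i+1)⁆
                ≤ ⁅(Kn F (i+1)).map π, (Kn F (i+1)).map π⁆ := Subgroup.commutator_mono ih ih
              _ = (⁅Kn F (i+1), Kn F (i+1)⁆).map π := (Subgroup.map_commutator _ _ _).symm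
              _ ≤ (Kn F (i+2)).map π := Subgroup.map_mono (Subgroup.commutator_le.mpr
                    (fun a ha b hb => comm_Kn (by omega) ha hb))
        refine ⟨⟨n + 2, ?_⟩⟩
        have h1 := hds (n + 1)
        have h2 : (Kn F (n + 2)).map π ≤ ⊥ := by
          intro x hx
          obtain ⟨k, hk, rfl⟩ := hx
          rw [Subgroup.mem_bot]
          exact (QuotientGroup.eq_one_iff _).mpr (hKn_le (Kn_antitone (by omega) hk))
        exact le_bot_iff.mp (h1.trans h2)
      have hcomm : ∀ a b : Matrix.SpecialLinearGroup (Fin 2) (PowerSeries F) ⧸ N,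
          a * b = b * a := IsSimpleGroup.comm_iff_isSolvable.mpr hsolv
      have hcommN : ∀ g g' : Matrix.SpecialLinearGroup (Fin 2) (PowerSeries F),
          ⁅g, g'⁆ ∈ N := by
        intro g g'
        apply (QuotientGroup.eq_one_iff _).mp
        show π ⁅g, g'⁆ = 1
        rw [show π ⁅g, g'⁆ = ⁅π g, π g'⁆ from map_commutatorElement π g g',
          commutatorElement_eq_one_iff_commute]
        exact hcomm _ _
      obtain ⟨u0, hu0, hu02⟩ := exists_u h
      set cu := PowerSeries.C (R := F) u0 with hcudef
      set cuv := PowerSeries.C (R := F) u0⁻¹ with hcuvdef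
      have hcu : cu * cuv = 1 := by
        rw [hcudef, hcuvdef, ← _root_.map_mul, mul_inv_cancel₀ hu0, _root_.map_one]
      have hE12N : ∀ t, E12 t ∈ N := by
        intro t
        have hc := hcommN (Dg cu cuv hcu) (E12 ((PowerSeries.C (R := F) ((u0 * u0 - 1)⁻¹)) * t))
        rw [comm_Dg_E12] at hc
        have hCC : cu * cu - 1 = PowerSeries.C (R := F) (u0 * u0 - 1) := by
          rw [_root_.map_sub, _root_.map_mul, _root_.map_one, hcudef]
        have heq : (cu * cu - 1) * ((PowerSeries.C (R := F) ((u0 * u0 - 1)⁻¹)) * t) = t := by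
          rw [hCC, ← mul_assoc, ← _root_.map_mul,
            mul_inv_cancel₀ (fun hz => hu02 (by linear_combination hz)),
            _root_.map_one, one_mul]
        rwa [heq] at hc
      have hE21N : ∀ t, E21 t ∈ N := by
        intro t
        have hvv : u0⁻¹ * u0⁻¹ - 1 ≠ 0 := by
          intro hz
          apply hu02
          have h1 : u0⁻¹ * u0⁻¹ = 1 := by linear_combination hz
          have h2 := congrArg (fun z => z * (u0 * u0)) h1
          simp only [one_mul] at h2
          rw [show u0⁻¹ * u0⁻¹ * (u0 * u0) = (u0⁻¹ * u0) * (u0⁻¹ * u0) by ring,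
            inv_mul_cancel₀ hu0, one_mul] at h2
          exact h2.symm
        have hc := hcommN (Dg cu cuv hcu) (E21 ((PowerSeries.C (R := F) ((u0⁻¹ * u0⁻¹ - 1)⁻¹)) * t))
        rw [comm_Dg_E21] at hc
        have hCC : cuv * cuv - 1 = PowerSeries.C (R := F) (u0⁻¹ * u0⁻¹ - 1) := by
          rw [_root_.map_sub, _root_.map_mul, _root_.map_one, hcuvdef]
        have heq : (cuv * cuv - 1) * ((PowerSeries.C (R := F) ((u0⁻¹ * u0⁻¹ - 1)⁻¹)) * t) = t := by
          rw [hCC, ← mul_assoc, ← _root_.map_mul, mul_inv_cancel₀ hvv,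
            _root_.map_one, one_mul]
        rwa [heq] at hc
      apply hNne
      rw [Subgroup.eq_top_iff']
      exact gen_elem N hE12N hE21N
  -- final equivalence
  intro A
  constructor
  · intro hA
    by_contra hcon
    push_neg at hcon
    apply hNne
    haveI : N.Normal := inferInstance
    have hnmap : (N.map (rho)).Normal := Subgroup.Normal.map this rho rho_surj
    have hmem : rho A ∈ N.map rho := Subgroup.mem_map_of_mem _ hA
    have h1 : (rho A).1 ≠ 1 := by rw [rho_coe]; exact hcon.1
    have hm1 : (rho A).1 ≠ -1 := by rw [rho_coe]; exact hcon.2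
    have hall := SL2_quasisimple h (N.map rho) hnmap _ hmem h1 hm1
    rw [Subgroup.eq_top_iff']
    intro g
    obtain ⟨j, hj, hjg⟩ := hall (rho g)
    have hker : (g * j⁻¹).1.map (PowerSeries.constantCoeff (R := F)) = 1 := by
      have : rho (g * j⁻¹) = 1 := by
        rw [_root_.map_mul, _root_.map_inv, hjg]
        simp
      calc (g * j⁻¹).1.map (PowerSeries.constantCoeff (R := F)) = (rho (g * j⁻¹)).1 := rfl
      _ = (1 : SL2 F).1 := by rw [this]
      _ = 1 := Matrix.SpecialLinearGroup.coe_one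
    have hgj : g * j⁻¹ ∈ N := hMN (Or.inl hker)
    have := N.mul_mem hgj hj
    simpa using this
  · intro hA
    exact hMN hA
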